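/- arXiv:1101.2139 — 2 statements merged into one kernel-verified Lean document; each statement's English description precedes it below -/
import Mathlib

section
/- Existence of a well-supported plaquette: let E* < 4 − √8. There is a constant c = c(E*) > 0 such that for every eigenfunction ψ of H_Λ(A) with eigenvalue E ≤ E* (and E ≥ 0), there exists a unit square Q = {x, x+e₁, x+e₂, x+e₁+e₂} contained in Λ with min_{y ∈ Q} |ψ(y)| ≥ c · max_{z ∈ Λ} |ψ(z)|. -/
open scoped Classical

/-- `x` and `y` are nearest neighbors in `ℤ²` (`|x - y| = 1`). -/
def edge (x y : ℤ × ℤ) : Prop := (x.1 - y.1) ^ 2 + (x.2 - y.2) ^ 2 = 1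

/-- The four nearest neighbors of a point of `ℤ²`. -/
def nbrs (x : ℤ × ℤ) : Finset (ℤ × ℤ) :=
  {x + (1, 0), x - (1, 0), x + (0, 1), x - (0, 1)}

/-- The finite-volume magnetic Schrödinger operator with simple boundary conditions:
`(H_Λ(A) ψ)(x) = 4 ψ(x) - Σ_{y ∈ Λ, |x-y|=1} e^{iA(x,y)} ψ(y)`. -/
noncomputable def Ham (Λ : Finset (ℤ × ℤ)) (A : ℤ × ℤ → ℤ × ℤ → ℝ)
    (ψ : ℤ × ℤ → ℂ) (x : ℤ × ℤ) : ℂ :=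
  4 * ψ x - ∑ y ∈ Λ.filter (fun y => edge x y), Complex.exp (Complex.I * (A x y)) * ψ y

/-- The current of a wavefunction `ψ` along the directed edge `(x,y)`:
`J_ψ(x,y) = -2 Re( conj(ψ x) · i e^{iA(x,y)} ψ y )`. -/
noncomputable def cur (A : ℤ × ℤ → ℤ × ℤ → ℝ) (ψ : ℤ × ℤ → ℂ) (x y : ℤ × ℤ) : ℝ :=
  -2 * ((starRingEnd ℂ) (ψ x) * Complex.I * Complex.exp (Complex.I * (A x y)) * ψ y).re

/-- The box `Λ_L = {x ∈ ℤ² : max(|x₁|, |x₂|) ≤ L}`. -/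
noncomputable def box (L : ℕ) : Finset (ℤ × ℤ) := Finset.Icc (-(L : ℤ), -(L : ℤ)) ((L : ℤ), (L : ℤ))

/-- The unit square (plaquette) with lower left corner `p`. -/
def squareF (p : ℤ × ℤ) : Finset (ℤ × ℤ) := {p, p + (1, 0), p + (0, 1), p + (1, 1)}

lemma pa_aux (x : ℤ × ℤ) (a b a' b' : ℤ) : x + (a,b) + (a',b') = x + (a+a',b+b') := by
  simp [Prod.ext_iff]; constructor <;> ring

lemma int_sq_one_aux {a b : ℤ} (h : a^2 + b^2 = 1) :
    (a=1∧b=0)∨(a=-1∧b=0)∨(a=0∧b=1)∨(a=0∧b=-1) := by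
  have h1 : a^2 ≤ 1 := by nlinarith [sq_nonneg b]
  have h2 : b^2 ≤ 1 := by nlinarith [sq_nonneg a]
  have ha1 : -1 ≤ a := by nlinarith
  have ha2 : a ≤ 1 := by nlinarith
  have hb1 : -1 ≤ b := by nlinarith
  have hb2 : b ≤ 1 := by nlinarith
  interval_cases a <;> interval_cases b <;> omega

lemma edge_mem_nbrs_aux {x y : ℤ × ℤ} (h : edge x y) : y ∈ nbrs x := by
  have h' := int_sq_one_aux h
  simp only [nbrs, Finset.mem_insert, Finset.mem_singleton, Prod.ext_iff]
  simp only [Prod.fst_add, Prod.snd_add, Prod.fst_sub, Prod.snd_sub]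
  rcases h' with ⟨h1,h2⟩|⟨h1,h2⟩|⟨h1,h2⟩|⟨h1,h2⟩ <;> simp <;> omega

lemma keyineq_aux (L : ℕ) (A : ℤ × ℤ → ℤ × ℤ → ℝ) (ψ : ℤ × ℤ → ℂ) (E : ℝ)
    (hψ0 : ∀ x ∉ box L, ψ x = 0)
    (heig : ∀ x ∈ box L, Ham (box L) A ψ x = (E : ℂ) * ψ x)
    (hE4 : E ≤ 4) (x : ℤ × ℤ) :
    (4 - E) * ‖ψ x‖ ≤ ‖ψ (x+(1,0))‖ + ‖ψ (x+(-1,0))‖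
      + ‖ψ (x+(0,1))‖ + ‖ψ (x+(0,-1))‖ := by
  by_cases hx : x ∈ box L
  · have h := heig x hx
    unfold Ham at h
    set S := ∑ y ∈ (box L).filter (fun y => edge x y), Complex.exp (Complex.I * (A x y)) * ψ y
      with hS
    have hSe : S = ((4 - E : ℝ) : ℂ) * ψ x := by push_cast; linear_combination -h
    have habs : ‖S‖ = (4 - E) * ‖ψ x‖ := by
      rw [hSe, norm_mul, Complex.norm_real, Real.norm_eq_abs, abs_of_nonneg (by linarith)]
    have hle1 : ‖S‖ ≤ ∑ y ∈ (box L).filter (fun y => edge x y), ‖ψ y‖ := by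
      refine le_trans (norm_sum_le _ _) ?_
      apply Finset.sum_le_sum
      intro y _
      rw [norm_mul]
      simp [Complex.norm_exp]
    have hsub : (box L).filter (fun y => edge x y) ⊆ nbrs x := by
      intro y hy
      exact edge_mem_nbrs_aux (Finset.mem_filter.mp hy).2
    have hle2 : ∑ y ∈ (box L).filter (fun y => edge x y), ‖ψ y‖
        ≤ ∑ y ∈ nbrs x, ‖ψ y‖ :=
      Finset.sum_le_sum_of_subset_of_nonneg hsub (fun y _ _ => by positivity)
    have hnb : ∑ y ∈ nbrs x, ‖ψ y‖ = ‖ψ (x+(1,0))‖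
        + ‖ψ (x+(-1,0))‖ + ‖ψ (x+(0,1))‖ + ‖ψ (x+(0,-1))‖ := by
      have e1 : x - ((1:ℤ),(0:ℤ)) = x + (-1,0) := by simp [Prod.ext_iff] <;> omega
      have e2 : x - ((0:ℤ),(1:ℤ)) = x + (0,-1) := by simp [Prod.ext_iff] <;> omega
      rw [nbrs, e1, e2]
      rw [Finset.sum_insert (by simp [Prod.ext_iff]),
        Finset.sum_insert (by simp [Prod.ext_iff]),
        Finset.sum_insert (by simp [Prod.ext_iff]), Finset.sum_singleton]
      ring
    linarith [habs ▸ hle1, hnb ▸ hle2]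
  · rw [hψ0 x hx]
    simp only [norm_zero, mul_zero]
    positivity

lemma finish_aux (L : ℕ) (ψ : ℤ × ℤ → ℂ) (c M : ℝ) (hcM : 0 < c * M)
    (hψ0 : ∀ x ∉ box L, ψ x = 0) (x₀ : ℤ × ℤ) (a b : ℤ)
    (hab : (a = 1 ∨ a = -1) ∧ (b = 1 ∨ b = -1))
    (h0 : c * M ≤ ‖ψ x₀‖) (h1 : c * M ≤ ‖ψ (x₀+(a,0))‖)
    (h2 : c * M ≤ ‖ψ (x₀+(0,b))‖) (h3 : c * M ≤ ‖ψ (x₀+(a,b))‖) :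
    ∃ p : ℤ × ℤ, squareF p ⊆ box L ∧ ∀ q ∈ squareF p, c * M ≤ ‖ψ q‖ := by
  have mem : ∀ q : ℤ × ℤ, c * M ≤ ‖ψ q‖ → q ∈ box L := by
    intro q h
    by_contra hq
    rw [hψ0 q hq] at h
    simp only [norm_zero] at h
    linarith
  obtain ⟨ha, hb⟩ := hab
  have main : ∃ p : ℤ × ℤ, ∀ q ∈ squareF p, c * M ≤ ‖ψ q‖ := by
    rcases ha with rfl|rfl <;> rcases hb with rfl|rfl
    · refine ⟨x₀, ?_⟩
      intro q hq
      simp only [squareF, Finset.mem_insert, Finset.mem_singleton] at hq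
      rcases hq with rfl|rfl|rfl|rfl <;> assumption
    · refine ⟨x₀ + (0,-1), ?_⟩
      intro q hq
      simp only [squareF, Finset.mem_insert, Finset.mem_singleton] at hq
      rcases hq with rfl|rfl|rfl|rfl
      · exact h2
      · rw [show x₀ + (0,-1) + (1,0) = x₀ + (1,-1) from by rw [pa_aux]; norm_num]; exact h3
      · rw [show x₀ + (0,-1) + (0,1) = x₀ from by rw [pa_aux]; norm_num]; exact h0
      · rw [show x₀ + (0,-1) + (1,1) = x₀ + (1,0) from by rw [pa_aux]; norm_num]; exact h1
    · refine ⟨x₀ + (-1,0), ?_⟩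
      intro q hq
      simp only [squareF, Finset.mem_insert, Finset.mem_singleton] at hq
      rcases hq with rfl|rfl|rfl|rfl
      · exact h1
      · rw [show x₀ + (-1,0) + (1,0) = x₀ from by rw [pa_aux]; norm_num]; exact h0
      · rw [show x₀ + (-1,0) + (0,1) = x₀ + (-1,1) from by rw [pa_aux]; norm_num]; exact h3
      · rw [show x₀ + (-1,0) + (1,1) = x₀ + (0,1) from by rw [pa_aux]; norm_num]; exact h2
    · refine ⟨x₀ + (-1,-1), ?_⟩
      intro q hq
      simp only [squareF, Finset.mem_insert, Finset.mem_singleton] at hq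
      rcases hq with rfl|rfl|rfl|rfl
      · exact h3
      · rw [show x₀ + (-1,-1) + (1,0) = x₀ + (0,-1) from by rw [pa_aux]; norm_num]; exact h2
      · rw [show x₀ + (-1,-1) + (0,1) = x₀ + (-1,0) from by rw [pa_aux]; norm_num]; exact h1
      · rw [show x₀ + (-1,-1) + (1,1) = x₀ from by rw [pa_aux]; norm_num]; exact h0
  obtain ⟨p, hp⟩ := main
  exact ⟨p, fun q hq => mem q (hp q hq), hp⟩

set_option maxHeartbeats 2000000 in
/-- existence of a well-supported plaquette.  For `E* < 4 - √8` there is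
`c = c(E*) > 0` such that every eigenfunction `ψ` of `H_{Λ_L}(A)` with eigenvalue
`E ∈ [0, E*]` (extended by zero outside `Λ_L`, with maximum modulus `M`) admits a unit
square `Q ⊆ Λ_L` on which `|ψ| ≥ c M`. -/
theorem stmt12 (Estar : ℝ) (hEstar : Estar < 4 - Real.sqrt 8) :
    ∃ c > 0, ∀ (L : ℕ), 1 ≤ L → ∀ (A : ℤ × ℤ → ℤ × ℤ → ℝ) (ψ : ℤ × ℤ → ℂ) (E M : ℝ),
      (∀ x y, edge x y → A x y = -A y x) →
      (∀ x ∉ box L, ψ x = 0) →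
      (∀ x ∈ box L, Ham (box L) A ψ x = (E : ℂ) * ψ x) →
      0 ≤ E → E ≤ Estar →
      (∃ z ∈ box L, ‖ψ z‖ = M) →
      (∀ z ∈ box L, ‖ψ z‖ ≤ M) →
      ∃ p : ℤ × ℤ, squareF p ⊆ box L ∧ ∀ q ∈ squareF p, c * M ≤ ‖ψ q‖ := by
  have h28 : (14/5:ℝ) < Real.sqrt 8 := by
    rw [Real.lt_sqrt (by norm_num)]; norm_num
  have h207 : Real.sqrt 8 < 20/7 := by
    rw [Real.sqrt_lt' (by norm_num)]; norm_num
  have hsqrt0 : (0:ℝ) ≤ Real.sqrt 8 := Real.sqrt_nonneg 8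
  have hsq8 : Real.sqrt 8 ^ 2 = 8 := Real.sq_sqrt (by norm_num)
  set s : ℝ := min (4 - Estar) 4 with hs_def
  have hs8 : Real.sqrt 8 < s := lt_min (by linarith) (by linarith)
  have hssq : 8 < s ^ 2 := by nlinarith
  have hq1 : 0 < (s^2 - 8)/8 := by linarith
  have hq2 : 0 < s - 21/10 := by linarith
  have hq3 : 0 < (s*(s - 21/10) - 2)/2 := by
    nlinarith [mul_nonneg (sub_nonneg.mpr hs8.le)
      (show (0:ℝ) ≤ s + Real.sqrt 8 - 21/10 by linarith)]
  set c : ℝ := min (1/10) (min ((s^2-8)/8) (min (s-21/10) ((s*(s-21/10)-2)/2))) with hc_def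
  have hc_pos : 0 < c := lt_min (by norm_num) (lt_min hq1 (lt_min hq2 hq3))
  have hc10 : c ≤ 1/10 := min_le_left _ _
  have hcq1 : c ≤ (s^2-8)/8 := le_trans (min_le_right _ _) (min_le_left _ _)
  have hcq2 : c ≤ s - 21/10 :=
    le_trans (min_le_right _ _) (le_trans (min_le_right _ _) (min_le_left _ _))
  have hcq3 : c ≤ (s*(s-21/10)-2)/2 :=
    le_trans (min_le_right _ _) (le_trans (min_le_right _ _) (min_le_right _ _))
  set κ : ℝ := min (s/4) (s - 21/10) with hκ_def
  have hκ1 : κ ≤ s/4 := min_le_left _ _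
  have hκ2 : κ ≤ s - 21/10 := min_le_right _ _
  have hκc : c ≤ κ := le_min (by linarith) hcq2
  have hκpos : 0 < κ := lt_of_lt_of_le hc_pos hκc
  have hsκ2c : 2 + 2*c ≤ s*κ := by
    rcases le_total (s/4) (s - 21/10) with h|h
    · rw [hκ_def, min_eq_left h]; nlinarith
    · rw [hκ_def, min_eq_right h]; nlinarith
  refine ⟨c, hc_pos, ?_⟩
  intro L hL A ψ E M hA hψ0 heig hE0 hEE hex hbnd
  have hE4 : E ≤ 4 := by linarith
  have hsE : s ≤ 4 - E := le_trans (min_le_left _ _) (by linarith)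
  have key := fun x => keyineq_aux L A ψ E hψ0 heig hE4 x
  obtain ⟨x₀, hx₀mem, hx₀⟩ := hex
  have hM0 : 0 ≤ M := hx₀ ▸ norm_nonneg _
  have hub : ∀ z, ‖ψ z‖ ≤ M := by
    intro z
    by_cases h : z ∈ box L
    · exact hbnd z h
    · rw [hψ0 z h]; simpa using hM0
  rcases eq_or_lt_of_le hM0 with hM|hM
  · -- M = 0 : trivial
    refine ⟨(0,0), ?_, ?_⟩
    · intro q hq
      simp only [squareF, Finset.mem_insert, Finset.mem_singleton] at hq
      have hL' : (1:ℤ) ≤ L := by exact_mod_cast hL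
      rcases hq with rfl|rfl|rfl|rfl <;>
        simp [box, Finset.mem_Icc, Prod.le_def] <;> omega
    · intro q _
      rw [← hM, mul_zero]
      exact norm_nonneg _
  · -- M > 0
    have hcM : 0 < c * M := mul_pos hc_pos hM
    have hκM : c * M ≤ κ * M := mul_le_mul_of_nonneg_right hκc hM0
    -- step 2 lemmas
    have step2H : ∀ y : ℤ × ℤ, κ * M ≤ ‖ψ y‖ →
        c * M ≤ ‖ψ (y+(0,1))‖ ∨ c * M ≤ ‖ψ (y+(0,-1))‖ := by
      intro y hy
      by_contra hcon
      push_neg at hcon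
      obtain ⟨d1, d2⟩ := hcon
      have k := key y
      have e1 := hub (y+(1,0))
      have e2 := hub (y+(-1,0))
      have a1 : (2+2*c)*M ≤ (s*κ)*M := mul_le_mul_of_nonneg_right hsκ2c hM0
      have a2 : s*(κ*M) ≤ (4-E)*(κ*M) :=
        mul_le_mul_of_nonneg_right hsE (mul_nonneg hκpos.le hM0)
      have a3 : (4-E)*(κ*M) ≤ (4-E)*‖ψ y‖ :=
        mul_le_mul_of_nonneg_left hy (by linarith)
      linarith
    have step2V : ∀ y : ℤ × ℤ, κ * M ≤ ‖ψ y‖ →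
        c * M ≤ ‖ψ (y+(1,0))‖ ∨ c * M ≤ ‖ψ (y+(-1,0))‖ := by
      intro y hy
      by_contra hcon
      push_neg at hcon
      obtain ⟨d1, d2⟩ := hcon
      have k := key y
      have e1 := hub (y+(0,1))
      have e2 := hub (y+(0,-1))
      have a1 : (2+2*c)*M ≤ (s*κ)*M := mul_le_mul_of_nonneg_right hsκ2c hM0
      have a2 : s*(κ*M) ≤ (4-E)*(κ*M) :=
        mul_le_mul_of_nonneg_right hsE (mul_nonneg hκpos.le hM0)
      have a3 : (4-E)*(κ*M) ≤ (4-E)*‖ψ y‖ :=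
        mul_le_mul_of_nonneg_left hy (by linarith)
      linarith
    have k0 := key x₀
    rw [hx₀] at k0
    have hsM : s*M ≤ (4-E)*M := mul_le_mul_of_nonneg_right hsE hM0
    have hu1 := hub (x₀+(1,0))
    have hu2 := hub (x₀+(-1,0))
    have hu3 := hub (x₀+(0,1))
    have hu4 := hub (x₀+(0,-1))
    have hx₀c : c * M ≤ ‖ψ x₀‖ := by
      rw [hx₀]
      have := mul_le_mul_of_nonneg_right (show c ≤ 1 by linarith) hM0
      linarith
    have hκsmall : ∀ V : ℝ, κ*M ≤ V → c*M ≤ V := fun V hV => le_trans hκM hV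
    -- the "one small neighbor" bound: if one neighbor is < c*M then each other is ≥ κ*M
    have hκle : κ*M ≤ (s - 2 - c)*M :=
      mul_le_mul_of_nonneg_right (by linarith) hM0
    by_cases h1 : c * M ≤ ‖ψ (x₀+(1,0))‖
    · by_cases h2 : c * M ≤ ‖ψ (x₀+(-1,0))‖
      · by_cases h3 : c * M ≤ ‖ψ (x₀+(0,1))‖
        · by_cases h4 : c * M ≤ ‖ψ (x₀+(0,-1))‖
          · -- all neighbors ≥ c*M; find a neighbor ≥ κ*M
            have hmax : κ*M ≤ ‖ψ (x₀+(1,0))‖ ∨ κ*M ≤ ‖ψ (x₀+(-1,0))‖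
                ∨ κ*M ≤ ‖ψ (x₀+(0,1))‖ ∨ κ*M ≤ ‖ψ (x₀+(0,-1))‖ := by
              by_contra hcon
              push_neg at hcon
              obtain ⟨m1, m2, m3, m4⟩ := hcon
              have : κ*M ≤ (s/4)*M := mul_le_mul_of_nonneg_right hκ1 hM0
              linarith
            rcases hmax with hm|hm|hm|hm
            · rcases step2H _ hm with hd|hd
              · rw [pa_aux] at hd; norm_num at hd
                exact finish_aux L ψ c M hcM hψ0 x₀ 1 1 ⟨Or.inl rfl, Or.inl rfl⟩ hx₀c h1 h3 hd
              · rw [pa_aux] at hd; norm_num at hd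
                exact finish_aux L ψ c M hcM hψ0 x₀ 1 (-1) ⟨Or.inl rfl, Or.inr rfl⟩ hx₀c h1 h4 hd
            · rcases step2H _ hm with hd|hd
              · rw [pa_aux] at hd; norm_num at hd
                exact finish_aux L ψ c M hcM hψ0 x₀ (-1) 1 ⟨Or.inr rfl, Or.inl rfl⟩ hx₀c h2 h3 hd
              · rw [pa_aux] at hd; norm_num at hd
                exact finish_aux L ψ c M hcM hψ0 x₀ (-1) (-1) ⟨Or.inr rfl, Or.inr rfl⟩ hx₀c h2 h4 hd
            · rcases step2V _ hm with hd|hd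
              · rw [pa_aux] at hd; norm_num at hd
                exact finish_aux L ψ c M hcM hψ0 x₀ 1 1 ⟨Or.inl rfl, Or.inl rfl⟩ hx₀c h1 h3 hd
              · rw [pa_aux] at hd; norm_num at hd
                exact finish_aux L ψ c M hcM hψ0 x₀ (-1) 1 ⟨Or.inr rfl, Or.inl rfl⟩ hx₀c h2 h3 hd
            · rcases step2V _ hm with hd|hd
              · rw [pa_aux] at hd; norm_num at hd
                exact finish_aux L ψ c M hcM hψ0 x₀ 1 (-1) ⟨Or.inl rfl, Or.inr rfl⟩ hx₀c h1 h4 hd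
              · rw [pa_aux] at hd; norm_num at hd
                exact finish_aux L ψ c M hcM hψ0 x₀ (-1) (-1) ⟨Or.inr rfl, Or.inr rfl⟩ hx₀c h2 h4 hd
          · -- neighbor x₀+(0,-1) small: main direction (0,1)
            push_neg at h4
            have b3 : κ*M ≤ ‖ψ (x₀+(0,1))‖ := by linarith
            have b1 : κ*M ≤ ‖ψ (x₀+(1,0))‖ := by linarith
            have b2 : κ*M ≤ ‖ψ (x₀+(-1,0))‖ := by linarith
            rcases step2V _ b3 with hd|hd
            · rw [pa_aux] at hd; norm_num at hd
              exact finish_aux L ψ c M hcM hψ0 x₀ 1 1 ⟨Or.inl rfl, Or.inl rfl⟩ hx₀c h1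
                (hκsmall _ b3) hd
            · rw [pa_aux] at hd; norm_num at hd
              exact finish_aux L ψ c M hcM hψ0 x₀ (-1) 1 ⟨Or.inr rfl, Or.inl rfl⟩ hx₀c h2
                (hκsmall _ b3) hd
        · -- neighbor x₀+(0,1) small: main direction (0,-1)
          push_neg at h3
          have b4 : κ*M ≤ ‖ψ (x₀+(0,-1))‖ := by linarith
          have b1 : κ*M ≤ ‖ψ (x₀+(1,0))‖ := by linarith
          have b2 : κ*M ≤ ‖ψ (x₀+(-1,0))‖ := by linarith
          rcases step2V _ b4 with hd|hd
          · rw [pa_aux] at hd; norm_num at hd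
            exact finish_aux L ψ c M hcM hψ0 x₀ 1 (-1) ⟨Or.inl rfl, Or.inr rfl⟩ hx₀c h1
              (hκsmall _ b4) hd
          · rw [pa_aux] at hd; norm_num at hd
            exact finish_aux L ψ c M hcM hψ0 x₀ (-1) (-1) ⟨Or.inr rfl, Or.inr rfl⟩ hx₀c h2
              (hκsmall _ b4) hd
      · -- neighbor x₀+(-1,0) small: main direction (1,0)
        push_neg at h2
        have b1 : κ*M ≤ ‖ψ (x₀+(1,0))‖ := by linarith
        have b3 : κ*M ≤ ‖ψ (x₀+(0,1))‖ := by linarith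
        have b4 : κ*M ≤ ‖ψ (x₀+(0,-1))‖ := by linarith
        rcases step2H _ b1 with hd|hd
        · rw [pa_aux] at hd; norm_num at hd
          exact finish_aux L ψ c M hcM hψ0 x₀ 1 1 ⟨Or.inl rfl, Or.inl rfl⟩ hx₀c
            (hκsmall _ b1) (hκsmall _ b3) hd
        · rw [pa_aux] at hd; norm_num at hd
          exact finish_aux L ψ c M hcM hψ0 x₀ 1 (-1) ⟨Or.inl rfl, Or.inr rfl⟩ hx₀c
            (hκsmall _ b1) (hκsmall _ b4) hd
    · -- neighbor x₀+(1,0) small: main direction (-1,0)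
      push_neg at h1
      have b2 : κ*M ≤ ‖ψ (x₀+(-1,0))‖ := by linarith
      have b3 : κ*M ≤ ‖ψ (x₀+(0,1))‖ := by linarith
      have b4 : κ*M ≤ ‖ψ (x₀+(0,-1))‖ := by linarith
      rcases step2H _ b2 with hd|hd
      · rw [pa_aux] at hd; norm_num at hd
        exact finish_aux L ψ c M hcM hψ0 x₀ (-1) 1 ⟨Or.inr rfl, Or.inl rfl⟩ hx₀c
          (hκsmall _ b2) (hκsmall _ b3) hd
      · rw [pa_aux] at hd; norm_num at hd
        exact finish_aux L ψ c M hcM hψ0 x₀ (-1) (-1) ⟨Or.inr rfl, Or.inr rfl⟩ hx₀c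
          (hκsmall _ b2) (hκsmall _ b4) hd
end

section
/- Current recovery from flux derivatives: for each directed edge a in Λ interior to the lattice, let f_a be the unique plaquette such that a ∈ ∂f_a (with the orientation convention of the oriented boundary). Then for a ∈ 𝒜_Λ, J_ψ(a) = c_a ⟨Y_{f_a} H⟩_ψ − c_{ā} ⟨Y_{f_{ā}} H⟩_ψ, where c_a = 1 if f_a ⊂ Λ and c_a = 0 otherwise, and ψ is any eigenfunction of H_Λ(A) with real eigenvalue. -/
open scoped Classical

/-- The flux of the vector potential `A` through the plaquette with lower left corner
`p`: the sum of `A` over the four directed boundary edges. -/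
def flux (A : ℤ × ℤ → ℤ × ℤ → ℝ) (p : ℤ × ℤ) : ℝ :=
  A p (p + (1, 0)) + A (p + (1, 0)) (p + (1, 1))
    + A (p + (1, 1)) (p + (0, 1)) + A (p + (0, 1)) p

/-- `Tb b` : the set of angles (represented by real numbers, modulo `2π`) whose distance
to both `0` and `π` on the circle `ℝ/2πℤ` is at least `b`. -/
def Tb (b : ℝ) : Set ℝ := {θ : ℝ | ∀ n : ℤ, b ≤ |θ - n * Real.pi|}

/-- For a directed edge `(x,y)`, the lower left corner of the unique plaquette `f` whose
oriented boundary `∂f` contains `(x,y)`. -/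
def edgeFace (x y : ℤ × ℤ) : ℤ × ℤ :=
  if y = x + (1, 0) then x
  else if y = x - (1, 0) then y - (0, 1)
  else if y = x + (0, 1) then x - (1, 0)
  else y

lemma edge_cases {x y : ℤ × ℤ} (h : edge x y) :
    y = x + (1,0) ∨ y = x - (1,0) ∨ y = x + (0,1) ∨ y = x - (0,1) := by
  obtain ⟨x1,x2⟩ := x; obtain ⟨y1,y2⟩ := y
  simp only [edge] at h
  simp only [Prod.mk_add_mk, Prod.mk_sub_mk, Prod.mk.injEq]
  have h1 : (x1-y1)^2 ≤ 1 := by nlinarith [sq_nonneg (x2-y2)]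
  have h2 : (x2-y2)^2 ≤ 1 := by nlinarith [sq_nonneg (x1-y1)]
  have b1 : -1 ≤ x1-y1 := by nlinarith
  have b2 : x1-y1 ≤ 1 := by nlinarith
  have b3 : -1 ≤ x2-y2 := by nlinarith
  have b4 : x2-y2 ≤ 1 := by nlinarith
  have ha : x1-y1 = -1 ∨ x1-y1 = 0 ∨ x1-y1 = 1 := by omega
  have hb : x2-y2 = -1 ∨ x2-y2 = 0 ∨ x2-y2 = 1 := by omega
  rcases ha with ha|ha|ha <;> rcases hb with hb|hb|hb <;> rw [ha, hb] at h <;> norm_num at h <;> omega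

lemma edge_symm {x y : ℤ × ℤ} (h : edge x y) : edge y x := by
  unfold edge at *; linear_combination h

lemma edge_right (x : ℤ × ℤ) : edge x (x + (1,0)) := by simp [edge]
lemma edge_left (x : ℤ × ℤ) : edge x (x - (1,0)) := by simp [edge]
lemma edge_up (x : ℤ × ℤ) : edge x (x + (0,1)) := by simp [edge]
lemma edge_down (x : ℤ × ℤ) : edge x (x - (0,1)) := by simp [edge]

lemma edge_iff {x y : ℤ × ℤ} :
    edge x y ↔ (y = x + (1,0) ∨ y = x - (1,0) ∨ y = x + (0,1) ∨ y = x - (0,1)) := by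
  constructor
  · exact edge_cases
  · rintro (h|h|h|h) <;> subst h
    exacts [edge_right x, edge_left x, edge_up x, edge_down x]

lemma mem_box_iff {L : ℕ} {x : ℤ × ℤ} :
    x ∈ box L ↔ -(L:ℤ) ≤ x.1 ∧ x.1 ≤ L ∧ -(L:ℤ) ≤ x.2 ∧ x.2 ≤ L := by
  obtain ⟨a,b⟩ := x
  simp [box, Finset.mem_Icc, Prod.mk_le_mk]
  tauto

lemma mem_box_iff' {L : ℕ} {a b : ℤ} :
    ((a,b) : ℤ × ℤ) ∈ box L ↔ -(L:ℤ) ≤ a ∧ a ≤ L ∧ -(L:ℤ) ≤ b ∧ b ≤ L := by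
  simp [box, Finset.mem_Icc, Prod.mk_le_mk]
  tauto

lemma not_in_box {L : ℕ} {a b : ℤ} (h : (L:ℤ) < a ∨ a < -(L:ℤ) ∨ (L:ℤ) < b ∨ b < -(L:ℤ)) :
    ((a,b) : ℤ × ℤ) ∉ box L := by
  rw [mem_box_iff']; omega

lemma telescope_Icc (g : ℤ → ℝ) (a b : ℤ) (h : a ≤ b + 1) :
    ∑ k ∈ Finset.Icc a b, (g k - g (k+1)) = g a - g (b+1) := by
  have key : ∀ b : ℤ, a - 1 ≤ b → ∑ k ∈ Finset.Icc a b, (g k - g (k+1)) = g a - g (b+1) := by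
    refine Int.le_induction ?_ ?_
    · rw [show a - 1 + 1 = a by ring, Finset.Icc_eq_empty (by omega)]
      simp
    · intro n hn ih
      rw [show Finset.Icc a (n+1) = insert (n+1) (Finset.Icc a n) by
          ext k; simp only [Finset.mem_Icc, Finset.mem_insert]; omega,
        Finset.sum_insert (by simp [Finset.mem_Icc])]
      rw [ih]; ring
  exact key b (by omega)

section
variable {L : ℕ} {A : ℤ × ℤ → ℤ × ℤ → ℝ} {ψ : ℤ × ℤ → ℂ} {E : ℝ}

lemma cur_antisymm (hA : ∀ x y, edge x y → A x y = -A y x) {x y : ℤ × ℤ} (hxy : edge x y) :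
    cur A ψ y x = - cur A ψ x y := by
  unfold cur
  have h1 : A y x = - A x y := by
    rw [hA x y hxy]; ring
  rw [h1]
  have h2 : (starRingEnd ℂ) (ψ y) * Complex.I * Complex.exp (Complex.I * ((-A x y : ℝ) : ℂ)) * ψ x
      = - (starRingEnd ℂ) ((starRingEnd ℂ) (ψ x) * Complex.I * Complex.exp (Complex.I * (A x y)) * ψ y) := by
    rw [map_mul, map_mul, map_mul, ← Complex.exp_conj]
    simp only [Complex.conj_I, map_mul, Complex.conj_ofReal, RingHomCompTriple.comp_apply,
      RingHom.id_apply]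
    push_cast
    ring_nf
  rw [h2]
  simp only [Complex.neg_re, Complex.conj_re]
  ring

/-- The current extended by zero outside the box. -/
noncomputable def Jt (L : ℕ) (A : ℤ × ℤ → ℤ × ℤ → ℝ) (ψ : ℤ × ℤ → ℂ) (x y : ℤ × ℤ) : ℝ :=
  if x ∈ box L ∧ y ∈ box L ∧ edge x y then cur A ψ x y else 0

lemma Jt_zero_left {x y : ℤ × ℤ} (h : x ∉ box L) : Jt L A ψ x y = 0 := by
  unfold Jt; rw [if_neg]; tauto

lemma Jt_zero_right {x y : ℤ × ℤ} (h : y ∉ box L) : Jt L A ψ x y = 0 := by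
  unfold Jt; rw [if_neg]; tauto

lemma Jt_antisymm (hA : ∀ x y, edge x y → A x y = -A y x) (x y : ℤ × ℤ) :
    Jt L A ψ y x = - Jt L A ψ x y := by
  unfold Jt
  by_cases h : x ∈ box L ∧ y ∈ box L ∧ edge x y
  · rw [if_pos ⟨h.2.1, h.1, edge_symm h.2.2⟩, if_pos h, cur_antisymm hA h.2.2]
  · rw [if_neg h, if_neg (by rintro ⟨h1, h2, h3⟩; exact h ⟨h2, h1, edge_symm h3⟩)]
    simp

lemma Jt_eq_cur {x y : ℤ × ℤ} (hx : x ∈ box L) (hy : y ∈ box L) (hxy : edge x y) :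
    Jt L A ψ x y = cur A ψ x y := if_pos ⟨hx, hy, hxy⟩

lemma div_free (heig : ∀ x ∈ box L, Ham (box L) A ψ x = (E : ℂ) * ψ x) (v : ℤ × ℤ) :
    Jt L A ψ v (v+(1,0)) + Jt L A ψ v (v-(1,0)) + Jt L A ψ v (v+(0,1)) + Jt L A ψ v (v-(0,1)) = 0 := by
  by_cases hv : v ∈ box L
  · -- sum over neighbours in box of cur equals 0
    have hsum : ∑ y ∈ (box L).filter (fun y => edge v y), cur A ψ v y = 0 := by
      have hH := heig v hv
      unfold Ham at hH
      have hs : ∑ y ∈ (box L).filter (fun y => edge v y), Complex.exp (Complex.I * (A v y)) * ψ y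
          = (4 - (E:ℂ)) * ψ v := by linear_combination -hH
      unfold cur
      have key : ∑ y ∈ (box L).filter (fun y => edge v y),
          (starRingEnd ℂ) (ψ v) * Complex.I * Complex.exp (Complex.I * (A v y)) * ψ y
          = (starRingEnd ℂ) (ψ v) * Complex.I * ((4 - (E:ℂ)) * ψ v) := by
        rw [← hs, Finset.mul_sum]
        exact Finset.sum_congr rfl (fun y _ => by ring)
      rw [← Finset.mul_sum, ← Complex.re_sum, key]
      have h0 : (starRingEnd ℂ) (ψ v) * ψ v = (Complex.normSq (ψ v) : ℂ) := by
        rw [mul_comm, Complex.mul_conj]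
      have h3 : (starRingEnd ℂ) (ψ v) * Complex.I * ((4 - (E:ℂ)) * ψ v)
          = (4 - (E:ℂ)) * (Complex.normSq (ψ v) : ℂ) * Complex.I := by
        rw [← h0]; ring
      rw [h3]
      have h4 : ((4 - (E:ℂ)) * (Complex.normSq (ψ v) : ℂ) * Complex.I).re = 0 := by
        have : (4 - (E:ℂ)) * (Complex.normSq (ψ v) : ℂ) = (((4 - E) * Complex.normSq (ψ v) : ℝ) : ℂ) := by
          push_cast; ring
        rw [this]
        simp
      rw [h4]
      ring
    have hset : (box L).filter (fun y => edge v y)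
        = ({v+(1,0), v-(1,0), v+(0,1), v-(0,1)} : Finset (ℤ×ℤ)).filter (fun w => w ∈ box L) := by
      ext w
      simp only [Finset.mem_filter, Finset.mem_insert, Finset.mem_singleton, edge_iff]
      tauto
    rw [hset, Finset.sum_filter] at hsum
    have hJ : ∀ w, edge v w → Jt L A ψ v w = if w ∈ box L then cur A ψ v w else 0 := by
      intro w hw
      unfold Jt
      by_cases h : w ∈ box L
      · rw [if_pos ⟨hv, h, hw⟩, if_pos h]
      · rw [if_neg (by tauto), if_neg h]
    rw [hJ _ (edge_right v), hJ _ (edge_left v), hJ _ (edge_up v), hJ _ (edge_down v)]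
    rw [Finset.sum_insert (by simp [Prod.ext_iff]; try omega),
      Finset.sum_insert (by simp [Prod.ext_iff]; try omega),
      Finset.sum_insert (by simp [Prod.ext_iff]; try omega),
      Finset.sum_singleton] at hsum
    linarith [hsum]
  · rw [Jt_zero_left hv, Jt_zero_left hv, Jt_zero_left hv, Jt_zero_left hv]
    norm_num


/-- The dual potential (height function) of the current. -/
noncomputable def hF (L : ℕ) (A : ℤ × ℤ → ℤ × ℤ → ℝ) (ψ : ℤ × ℤ → ℂ) (p : ℤ × ℤ) : ℝ :=
  ∑ k ∈ Finset.Icc p.1 ((L:ℤ)-1), Jt L A ψ (k+1, p.2) (k+1, p.2+1)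

lemma hF_vert (p : ℤ × ℤ) :
    hF L A ψ p - hF L A ψ (p + (1,0)) = Jt L A ψ (p.1+1, p.2) (p.1+1, p.2+1) := by
  unfold hF
  have h1 : (p + (1,0)).1 = p.1 + 1 := rfl
  have h2 : (p + (1,0)).2 = p.2 + 0 := rfl
  rw [h1, h2]
  simp only [add_zero]
  by_cases hp : p.1 ≤ (L:ℤ) - 1
  · rw [show Finset.Icc p.1 ((L:ℤ)-1) = insert p.1 (Finset.Icc (p.1+1) ((L:ℤ)-1)) by
      ext k; simp only [Finset.mem_Icc, Finset.mem_insert]; omega,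
      Finset.sum_insert (by simp [Finset.mem_Icc])]
    ring
  · rw [Finset.Icc_eq_empty (by omega), Finset.Icc_eq_empty (by omega),
      Jt_zero_left (not_in_box (by omega))]
    simp

lemma hF_horiz (hA : ∀ x y, edge x y → A x y = -A y x)
    (heig : ∀ x ∈ box L, Ham (box L) A ψ x = (E : ℂ) * ψ x) (x : ℤ × ℤ) :
    hF L A ψ x - hF L A ψ (x - (0,1)) = Jt L A ψ x (x + (1,0)) := by
  unfold hF
  have h1 : (x - (0,1)).1 = x.1 - 0 := rfl
  have h2 : (x - (0,1)).2 = x.2 - 1 := rfl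
  rw [h1, h2]
  simp only [sub_zero]
  by_cases hx1 : x.1 ≤ (L:ℤ)
  swap
  · rw [Finset.Icc_eq_empty (by omega)]
    rw [Jt_zero_left (by rw [mem_box_iff]; omega)]
    simp
  rw [← Finset.sum_sub_distrib]
  have key : ∀ k : ℤ, Jt L A ψ (k+1, x.2) (k+1, x.2+1) - Jt L A ψ (k+1, x.2-1) (k+1, x.2-1+1)
      = (fun k => Jt L A ψ (k, x.2) (k+1, x.2)) k - (fun k => Jt L A ψ (k, x.2) (k+1, x.2)) (k+1) := by
    intro k
    have hd := div_free (E := E) heig (k+1, x.2)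
    have e1 : ((k:ℤ)+1, x.2) + (1,0) = (k+1+1, x.2) := by simp [Prod.ext_iff]
    have e2 : ((k:ℤ)+1, x.2) - (1,0) = (k, x.2) := by simp [Prod.ext_iff]
    have e3 : ((k:ℤ)+1, x.2) + (0,1) = (k+1, x.2+1) := by simp [Prod.ext_iff]
    have e4 : ((k:ℤ)+1, x.2) - (0,1) = (k+1, x.2-1) := by simp [Prod.ext_iff]
    rw [e1, e2, e3, e4] at hd
    have a1 := Jt_antisymm (ψ := ψ) (L := L) hA ((k+1:ℤ), x.2) (k, x.2)
    have a2 := Jt_antisymm (ψ := ψ) (L := L) hA ((k+1:ℤ), x.2) (k+1, x.2-1)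
    have e5 : (x.2 : ℤ) - 1 + 1 = x.2 := by ring
    rw [e5]
    simp only []
    linarith [hd, a1, a2]
  rw [Finset.sum_congr rfl (fun k _ => key k)]
  rw [telescope_Icc _ _ _ (by omega)]
  have e6 : ((L:ℤ) - 1 + 1) = (L:ℤ) := by ring
  rw [e6]
  have e7 : Jt L A ψ ((L:ℤ), x.2) ((L:ℤ)+1, x.2) = 0 :=
    Jt_zero_right (not_in_box (by omega))
  have e8 : (x.1, x.2) = x := rfl
  have e9 : (x.1 + 1, x.2) = x + (1,0) := by simp [Prod.ext_iff]
  rw [e7, e8, e9]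
  ring

lemma squareF_subset_iff {p : ℤ × ℤ} :
    squareF p ⊆ box L ↔ (-(L:ℤ) ≤ p.1 ∧ p.1 + 1 ≤ L ∧ -(L:ℤ) ≤ p.2 ∧ p.2 + 1 ≤ L) := by
  obtain ⟨p1, p2⟩ := p
  have c1 : ((p1, p2) : ℤ × ℤ) ∈ squareF (p1, p2) := by simp [squareF]
  have c2 : ((p1+1, p2+1) : ℤ × ℤ) ∈ squareF (p1, p2) := by
    simp only [squareF, Finset.mem_insert, Finset.mem_singleton, Prod.mk_add_mk, Prod.mk.injEq]
    tauto
  constructor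
  · intro h
    have h1 := mem_box_iff'.mp (h c1)
    have h2 := mem_box_iff'.mp (h c2)
    dsimp only
    omega
  · intro h q hq
    dsimp only at h
    simp only [squareF, Finset.mem_insert, Finset.mem_singleton, Prod.mk_add_mk] at hq
    rcases hq with h'|h'|h'|h' <;> subst h' <;> rw [mem_box_iff'] <;> omega

lemma hF_outside (hA : ∀ x y, edge x y → A x y = -A y x)
    (heig : ∀ x ∈ box L, Ham (box L) A ψ x = (E : ℂ) * ψ x) (p : ℤ × ℤ)
    (hp : ¬ squareF p ⊆ box L) : hF L A ψ p = 0 := by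
  rw [squareF_subset_iff] at hp
  push_neg at hp
  -- vertical out-of-range case, as a general fact
  have hvert : ∀ q : ℤ × ℤ, (q.2 < -(L:ℤ) ∨ (L:ℤ) - 1 < q.2) → hF L A ψ q = 0 := by
    intro q hq
    unfold hF
    apply Finset.sum_eq_zero
    intro k _
    rcases hq with hq | hq
    · exact Jt_zero_left (not_in_box (by omega))
    · exact Jt_zero_right (not_in_box (by omega))
  by_cases hq2 : p.2 < -(L:ℤ) ∨ (L:ℤ) - 1 < p.2
  · exact hvert p hq2
  push_neg at hq2
  by_cases hq1 : (L:ℤ) - 1 < p.1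
  · unfold hF
    rw [Finset.Icc_eq_empty (by omega)]
    simp
  -- remaining case : p.1 < -L
  have hp1 : p.1 < -(L:ℤ) := by omega
  -- step 1 : hF p = hF (-L-1, p.2)
  have step1 : hF L A ψ p = hF L A ψ (-(L:ℤ)-1, p.2) := by
    unfold hF
    refine (Finset.sum_subset (Finset.Icc_subset_Icc (by omega) le_rfl) ?_).symm
    intro k hk hk'
    simp only [Finset.mem_Icc] at hk hk'
    exact Jt_zero_left (not_in_box (by omega))
  rw [step1]
  -- step 2 : hF (-L-1, m) = 0 for all m
  have base : ∀ m : ℤ, (L:ℤ) - 1 < m → hF L A ψ (-(L:ℤ)-1, m) = 0 := fun m hm =>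
    hvert _ (Or.inr hm)
  have step : ∀ m : ℤ, hF L A ψ (-(L:ℤ)-1, m+1) = hF L A ψ (-(L:ℤ)-1, m) := by
    intro m
    have h := hF_horiz (E := E) hA heig (-(L:ℤ)-1, m+1)
    have e1 : ((-(L:ℤ)-1, m+1) : ℤ × ℤ) - (0,1) = (-(L:ℤ)-1, m) := by simp [Prod.ext_iff]
    have e2 : Jt L A ψ (-(L:ℤ)-1, m+1) ((-(L:ℤ)-1, m+1) + (1,0)) = 0 :=
      Jt_zero_left (not_in_box (by omega))
    rw [e1, e2] at h
    linarith
  have key : ∀ n : ℕ, hF L A ψ (-(L:ℤ)-1, (L:ℤ) - n) = 0 := by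
    intro n
    induction n with
    | zero => exact base _ (by push_cast; omega)
    | succ n ih =>
      have e : ((L:ℤ) - (n+1:ℕ)) + 1 = (L:ℤ) - n := by push_cast; ring
      have := step ((L:ℤ) - (n+1:ℕ))
      rw [e] at this
      rw [← this]
      exact ih
  have hm := key ((L:ℤ) - p.2).toNat
  have e : (L:ℤ) - ((L:ℤ) - p.2).toNat = p.2 := by omega
  rw [e] at hm
  exact hm


lemma hF_vert' (x : ℤ × ℤ) :
    hF L A ψ (x - (1,0)) - hF L A ψ x = Jt L A ψ x (x + (0,1)) := by
  have h1 := hF_vert (A := A) (ψ := ψ) (L := L) (x - (1,0))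
  have e1 : (x - (1,0)) + (1,0) = x := by simp [Prod.ext_iff]
  have e2 : ((x - (1,0)).1 + 1, (x - (1,0)).2) = x := by simp [Prod.ext_iff]
  have e3 : ((x - (1,0)).1 + 1, (x - (1,0)).2 + 1) = x + (0,1) := by simp [Prod.ext_iff]
  rw [e1, e2, e3] at h1
  exact h1

lemma edgeFace_right (x : ℤ × ℤ) : edgeFace x (x + (1,0)) = x := by
  unfold edgeFace; rw [if_pos rfl]

lemma edgeFace_right' (x : ℤ × ℤ) : edgeFace (x + (1,0)) x = x - (0,1) := by
  unfold edgeFace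
  rw [if_neg (by simp [Prod.ext_iff]; try omega), if_pos (by simp [Prod.ext_iff]; try omega)]

lemma edgeFace_left (x : ℤ × ℤ) : edgeFace x (x - (1,0)) = x - (1,0) - (0,1) := by
  unfold edgeFace
  rw [if_neg (by simp [Prod.ext_iff]; try omega), if_pos rfl]

lemma edgeFace_left' (x : ℤ × ℤ) : edgeFace (x - (1,0)) x = x - (1,0) := by
  unfold edgeFace
  rw [if_pos (by simp [Prod.ext_iff]; try omega)]

lemma edgeFace_up (x : ℤ × ℤ) : edgeFace x (x + (0,1)) = x - (1,0) := by
  unfold edgeFace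
  rw [if_neg (by simp [Prod.ext_iff]; try omega), if_neg (by simp [Prod.ext_iff]; try omega),
    if_pos rfl]

lemma edgeFace_up' (x : ℤ × ℤ) : edgeFace (x + (0,1)) x = x := by
  unfold edgeFace
  rw [if_neg (by simp [Prod.ext_iff]; try omega), if_neg (by simp [Prod.ext_iff]; try omega),
    if_neg (by simp [Prod.ext_iff]; try omega)]

lemma edgeFace_down (x : ℤ × ℤ) : edgeFace x (x - (0,1)) = x - (0,1) := by
  unfold edgeFace
  rw [if_neg (by simp [Prod.ext_iff]; try omega), if_neg (by simp [Prod.ext_iff]; try omega),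
    if_neg (by simp [Prod.ext_iff]; try omega)]

lemma edgeFace_down' (x : ℤ × ℤ) : edgeFace (x - (0,1)) x = x - (0,1) - (1,0) := by
  unfold edgeFace
  rw [if_neg (by simp [Prod.ext_iff]; try omega), if_neg (by simp [Prod.ext_iff]; try omega),
    if_pos (by simp [Prod.ext_iff]; try omega)]

lemma Jt_eq_hF_sub (hA : ∀ x y, edge x y → A x y = -A y x)
    (heig : ∀ x ∈ box L, Ham (box L) A ψ x = (E : ℂ) * ψ x)
    {x y : ℤ × ℤ} (hxy : edge x y) :
    Jt L A ψ x y = hF L A ψ (edgeFace x y) - hF L A ψ (edgeFace y x) := by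
  rcases edge_cases hxy with h|h|h|h <;> subst h
  · rw [edgeFace_right, edgeFace_right']
    have h1 := hF_horiz (E := E) hA heig x
    linarith
  · rw [edgeFace_left, edgeFace_left']
    have h1 := hF_horiz (E := E) hA heig (x - (1,0))
    have e1 : (x - (1,0)) + (1,0) = x := by simp [Prod.ext_iff]
    rw [e1] at h1
    have a1 := Jt_antisymm (ψ := ψ) (L := L) hA (x - (1,0)) x
    linarith
  · rw [edgeFace_up, edgeFace_up']
    have h1 := hF_vert' (A := A) (ψ := ψ) (L := L) x
    linarith
  · rw [edgeFace_down, edgeFace_down']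
    have h1 := hF_vert' (A := A) (ψ := ψ) (L := L) (x - (0,1))
    have e1 : (x - (0,1)) + (0,1) = x := by simp [Prod.ext_iff]
    rw [e1] at h1
    have a1 := Jt_antisymm (ψ := ψ) (L := L) hA (x - (0,1)) x
    linarith

lemma endpoints_mem_squareF {x y : ℤ × ℤ} (h : edge x y) :
    x ∈ squareF (edgeFace x y) ∧ y ∈ squareF (edgeFace x y) := by
  rcases edge_cases h with h|h|h|h <;> subst h
  · rw [edgeFace_right]
    constructor <;> simp [squareF, Prod.ext_iff] <;> try omega
  · rw [edgeFace_left]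
    constructor <;> simp [squareF, Prod.ext_iff] <;> try omega
  · rw [edgeFace_up]
    constructor <;> simp [squareF, Prod.ext_iff] <;> try omega
  · rw [edgeFace_down]
    constructor <;> simp [squareF, Prod.ext_iff] <;> try omega


lemma box_mono {L : ℕ} : box L ⊆ box (L+1) := by
  intro q hq
  rw [mem_box_iff] at hq ⊢
  push_cast
  omega

lemma sum_eq (hA : ∀ x y, edge x y → A x y = -A y x)
    (heig : ∀ x ∈ box L, Ham (box L) A ψ x = (E : ℂ) * ψ x)
    (β : ℤ × ℤ → ℤ × ℤ → ℝ) (hβ : ∀ x y, edge x y → β x y = -β y x)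
    (f : ℤ × ℤ) (hflux : ∀ p, flux β p = if p = f then 1 else 0) :
    ∑ x' ∈ box L, ∑ y' ∈ (box L).filter (fun y' => edge x' y'), β x' y' * cur A ψ x' y'
      = 2 * hF L A ψ f := by
  set E₁ : Finset ((ℤ×ℤ) × (ℤ×ℤ)) := ((box L) ×ˢ (box L)).filter (fun a => edge a.1 a.2) with hE₁
  set E₂ : Finset ((ℤ×ℤ) × (ℤ×ℤ)) := ((box (L+1)) ×ˢ (box (L+1))).filter (fun a => edge a.1 a.2) with hE₂
  have memE₁ : ∀ a : (ℤ×ℤ) × (ℤ×ℤ), a ∈ E₁ ↔ a.1 ∈ box L ∧ a.2 ∈ box L ∧ edge a.1 a.2 := by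
    intro a
    rw [hE₁]
    simp [Finset.mem_filter, Finset.mem_product]
    tauto
  have memE₂ : ∀ a : (ℤ×ℤ) × (ℤ×ℤ), a ∈ E₂ ↔ a.1 ∈ box (L+1) ∧ a.2 ∈ box (L+1) ∧ edge a.1 a.2 := by
    intro a
    rw [hE₂]
    simp [Finset.mem_filter, Finset.mem_product]
    tauto
  have hdouble : ∀ (F : ℤ×ℤ → ℤ×ℤ → ℝ),
      ∑ x' ∈ box L, ∑ y' ∈ (box L).filter (fun y' => edge x' y'), F x' y'
        = ∑ a ∈ E₁, F a.1 a.2 := by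
    intro F
    rw [hE₁, Finset.sum_filter, Finset.sum_product]
    exact Finset.sum_congr rfl (fun x' _ => (Finset.sum_filter _ _))
  rw [hdouble]
  -- replace cur by Jt
  have step1 : ∑ a ∈ E₁, β a.1 a.2 * cur A ψ a.1 a.2
      = ∑ a ∈ E₁, β a.1 a.2 * (hF L A ψ (edgeFace a.1 a.2) - hF L A ψ (edgeFace a.2 a.1)) := by
    refine Finset.sum_congr rfl (fun a ha => ?_)
    rw [memE₁] at ha
    rw [← Jt_eq_cur ha.1 ha.2.1 ha.2.2, Jt_eq_hF_sub (E := E) hA heig ha.2.2]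
  rw [step1]
  have step2 : ∑ a ∈ E₁, β a.1 a.2 * (hF L A ψ (edgeFace a.1 a.2) - hF L A ψ (edgeFace a.2 a.1))
      = 2 * ∑ a ∈ E₁, β a.1 a.2 * hF L A ψ (edgeFace a.1 a.2) := by
    have swap : ∑ a ∈ E₁, β a.1 a.2 * hF L A ψ (edgeFace a.2 a.1)
        = ∑ a ∈ E₁, β a.2 a.1 * hF L A ψ (edgeFace a.1 a.2) := by
      refine Finset.sum_nbij' (fun a => (a.2, a.1)) (fun a => (a.2, a.1)) ?_ ?_ ?_ ?_ ?_
      · intro a ha; rw [memE₁] at ha ⊢; exact ⟨ha.2.1, ha.1, edge_symm ha.2.2⟩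
      · intro a ha; rw [memE₁] at ha ⊢; exact ⟨ha.2.1, ha.1, edge_symm ha.2.2⟩
      · intro a _; rfl
      · intro a _; rfl
      · intro a _; rfl
    rw [Finset.sum_congr rfl (fun a (_ : a ∈ E₁) => mul_sub (β a.1 a.2) _ _), Finset.sum_sub_distrib, swap]
    have : ∑ a ∈ E₁, β a.2 a.1 * hF L A ψ (edgeFace a.1 a.2)
        = - ∑ a ∈ E₁, β a.1 a.2 * hF L A ψ (edgeFace a.1 a.2) := by
      rw [← Finset.sum_neg_distrib]
      refine Finset.sum_congr rfl (fun a ha => ?_)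
      rw [memE₁] at ha
      rw [hβ a.2 a.1 (edge_symm ha.2.2)]
      ring
    rw [this]
    ring
  rw [step2]
  -- extend E₁ to E₂
  have hsubset : E₁ ⊆ E₂ := by
    intro a ha
    rw [memE₁] at ha
    rw [memE₂]
    exact ⟨box_mono ha.1, box_mono ha.2.1, ha.2.2⟩
  have step3 : ∑ a ∈ E₁, β a.1 a.2 * hF L A ψ (edgeFace a.1 a.2)
      = ∑ a ∈ E₂, β a.1 a.2 * hF L A ψ (edgeFace a.1 a.2) := by
    refine Finset.sum_subset hsubset ?_
    intro a ha ha'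
    rw [memE₂] at ha
    rw [memE₁] at ha'
    have hnot : ¬ squareF (edgeFace a.1 a.2) ⊆ box L := by
      intro hsub
      obtain ⟨m1, m2⟩ := endpoints_mem_squareF ha.2.2
      exact ha' ⟨hsub m1, hsub m2, ha.2.2⟩
    rw [hF_outside (E := E) hA heig _ hnot]
    ring
  rw [step3]
  -- fiberwise over faces
  have hmap : ∀ a ∈ E₂, edgeFace a.1 a.2 ∈ box (L+2) := by
    intro a ha
    rw [memE₂] at ha
    obtain ⟨h1, h2, he⟩ := ha
    rw [mem_box_iff] at h1 h2 ⊢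
    push_cast at h1 h2 ⊢
    rcases edge_cases he with h|h|h|h <;> rw [h] at h2 ⊢ <;>
      [rw [edgeFace_right]; rw [edgeFace_left]; rw [edgeFace_up]; rw [edgeFace_down]] <;>
      simp only [Prod.fst_add, Prod.snd_add, Prod.fst_sub, Prod.snd_sub] at h2 ⊢ <;> omega
  rw [← Finset.sum_fiberwise_of_maps_to hmap (fun a => β a.1 a.2 * hF L A ψ (edgeFace a.1 a.2))]
  have claim : ∀ f' ∈ box (L+2),
      (∑ a ∈ E₂.filter (fun a => edgeFace a.1 a.2 = f'), β a.1 a.2 * hF L A ψ (edgeFace a.1 a.2))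
        = if f' = f then hF L A ψ f else 0 := by
    intro f' _
    have hcong : ∑ a ∈ E₂.filter (fun a => edgeFace a.1 a.2 = f'), β a.1 a.2 * hF L A ψ (edgeFace a.1 a.2)
        = ∑ a ∈ E₂.filter (fun a => edgeFace a.1 a.2 = f'), β a.1 a.2 * hF L A ψ f' := by
      refine Finset.sum_congr rfl (fun a ha => ?_)
      rw [(Finset.mem_filter.mp ha).2]
    rw [hcong]
    by_cases hsub : squareF f' ⊆ box L
    · have hfour : E₂.filter (fun a => edgeFace a.1 a.2 = f')
          = ({(f', f'+(1,0)), (f'+(1,0), f'+(1,1)), (f'+(1,1), f'+(0,1)), (f'+(0,1), f')} :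
              Finset ((ℤ×ℤ) × (ℤ×ℤ))) := by
        have m0 : f' ∈ box (L+1) := box_mono (hsub (by simp [squareF]))
        have m1 : f' + (1,0) ∈ box (L+1) := box_mono (hsub (by simp [squareF]))
        have m2 : f' + (0,1) ∈ box (L+1) := box_mono (hsub (by simp [squareF]))
        have m3 : f' + (1,1) ∈ box (L+1) := box_mono (hsub (by simp [squareF]))
        have q1 : f' + (1,1) = (f' + (1,0)) + (0,1) := by simp [Prod.ext_iff]
        have q2 : f' + (0,1) = (f' + (1,1)) - (1,0) := by simp [Prod.ext_iff]; try omega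
        have q3 : f' = (f' + (0,1)) - (0,1) := by simp [Prod.ext_iff]
        ext a
        simp only [Finset.mem_filter, Finset.mem_insert, Finset.mem_singleton]
        constructor
        · rintro ⟨ha, hface⟩
          rw [memE₂] at ha
          obtain ⟨_, _, he⟩ := ha
          rcases edge_cases he with h|h|h|h
          · rw [h, edgeFace_right] at hface
            refine Or.inl ?_
            rw [Prod.ext_iff]
            exact ⟨hface, by rw [h, hface]⟩
          · rw [h, edgeFace_left] at hface
            refine Or.inr (Or.inr (Or.inl ?_))
            rw [Prod.ext_iff]
            constructor
            · rw [← hface]; simp [Prod.ext_iff]; try omega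
            · rw [h, ← hface]; simp [Prod.ext_iff]; try omega
          · rw [h, edgeFace_up] at hface
            refine Or.inr (Or.inl ?_)
            rw [Prod.ext_iff]
            constructor
            · rw [← hface]; simp [Prod.ext_iff]; try omega
            · rw [h, ← hface]; simp [Prod.ext_iff]; try omega
          · rw [h, edgeFace_down] at hface
            refine Or.inr (Or.inr (Or.inr ?_))
            rw [Prod.ext_iff]
            refine ⟨?_, ?_⟩
            · show a.1 = f' + (0,1)
              rw [← hface]
              simp [Prod.ext_iff]
            · show a.2 = f'
              rw [h]; exact hface
        · rintro (h|h|h|h) <;> subst h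
          · exact ⟨(memE₂ _).mpr ⟨m0, m1, edge_right f'⟩, edgeFace_right f'⟩
          · refine ⟨(memE₂ _).mpr ⟨m1, ?_, ?_⟩, ?_⟩
            · show f' + (1,1) ∈ box (L+1); exact m3
            · show edge (f'+(1,0)) (f'+(1,1)); rw [q1]; exact edge_up _
            · show edgeFace (f'+(1,0)) (f'+(1,1)) = f'
              rw [q1, edgeFace_up]; simp [Prod.ext_iff]
          · refine ⟨(memE₂ _).mpr ⟨m3, ?_, ?_⟩, ?_⟩
            · show f' + (0,1) ∈ box (L+1); exact m2
            · show edge (f'+(1,1)) (f'+(0,1)); rw [q2]; exact edge_left _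
            · show edgeFace (f'+(1,1)) (f'+(0,1)) = f'
              rw [q2, edgeFace_left]; simp [Prod.ext_iff]; try omega
          · refine ⟨(memE₂ _).mpr ⟨m2, ?_, ?_⟩, ?_⟩
            · show f' ∈ box (L+1); exact m0
            · show edge (f'+(0,1)) f'; nth_rewrite 2 [q3]; exact edge_down _
            · show edgeFace (f'+(0,1)) f' = f'
              nth_rewrite 2 [q3]
              rw [edgeFace_down]; simp [Prod.ext_iff]
      rw [hfour]
      rw [Finset.sum_insert (by simp [Prod.ext_iff]; try omega),
        Finset.sum_insert (by simp [Prod.ext_iff]; try omega),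
        Finset.sum_insert (by simp [Prod.ext_iff]; try omega),
        Finset.sum_singleton]
      have hfl := hflux f'
      unfold flux at hfl
      dsimp only
      rw [show β f' (f'+(1,0)) * hF L A ψ f' + (β (f'+(1,0)) (f'+(1,1)) * hF L A ψ f'
          + (β (f'+(1,1)) (f'+(0,1)) * hF L A ψ f' + β (f'+(0,1)) f' * hF L A ψ f'))
          = (β f' (f'+(1,0)) + β (f'+(1,0)) (f'+(1,1)) + β (f'+(1,1)) (f'+(0,1)) + β (f'+(0,1)) f')
            * hF L A ψ f' from by ring, hfl]
      by_cases hff : f' = f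
      · subst hff; rw [if_pos rfl, if_pos rfl]; ring
      · rw [if_neg hff, if_neg hff]; ring
    · have h0 : hF L A ψ f' = 0 := hF_outside (E := E) hA heig _ hsub
      rw [h0]
      simp only [mul_zero, Finset.sum_const_zero]
      by_cases hff : f' = f
      · subst hff; rw [if_pos rfl, h0]
      · rw [if_neg hff]
  rw [Finset.sum_congr rfl claim, Finset.sum_ite_eq' (box (L+2)) f (fun _ => hF L A ψ f)]
  by_cases hf : f ∈ box (L+2)
  · rw [if_pos hf]
  · rw [if_neg hf]
    have hnot : ¬ squareF f ⊆ box L := by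
      intro hsub
      rw [squareF_subset_iff] at hsub
      rw [mem_box_iff] at hf
      push_cast at hf
      omega
    rw [hF_outside (E := E) hA heig _ hnot]

end

/-- current recovery from flux derivatives.  For any family of gauges
`α f` (antisymmetric, with flux `δ_f`), any eigenfunction `ψ` of `H_{Λ_L}(A)` with real
eigenvalue and any directed edge `a = (x,y) ∈ 𝒜_{Λ_L}`,
`J_ψ(a) = c_a ⟨Y_{f_a} H⟩_ψ - c_{ā} ⟨Y_{f_{ā}} H⟩_ψ`, where
`⟨Y_f H⟩_ψ = (1/2) Σ_{a' ∈ 𝒜_Λ} α_f(a') J_ψ(a')` and `c_a = 1` iff `f_a ⊆ Λ_L`. -/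
theorem stmt15 (L : ℕ) (hL : 1 ≤ L) (A : ℤ × ℤ → ℤ × ℤ → ℝ)
    (α : ℤ × ℤ → ℤ × ℤ → ℤ × ℤ → ℝ) (ψ : ℤ × ℤ → ℂ) (E : ℝ)
    (hA : ∀ x y, edge x y → A x y = -A y x)
    (hα : ∀ f x y, edge x y → α f x y = -α f y x)
    (hαflux : ∀ f p : ℤ × ℤ, flux (α f) p = if p = f then 1 else 0)
    (heig : ∀ x ∈ box L, Ham (box L) A ψ x = (E : ℂ) * ψ x)
    (x y : ℤ × ℤ) (hx : x ∈ box L) (hy : y ∈ box L) (hxy : edge x y) :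
    cur A ψ x y
      = (if squareF (edgeFace x y) ⊆ box L then (1 : ℝ) else 0)
          * ((1 / 2) * ∑ x' ∈ box L, ∑ y' ∈ (box L).filter (fun y' => edge x' y'),
              α (edgeFace x y) x' y' * cur A ψ x' y')
        - (if squareF (edgeFace y x) ⊆ box L then (1 : ℝ) else 0)
          * ((1 / 2) * ∑ x' ∈ box L, ∑ y' ∈ (box L).filter (fun y' => edge x' y'),
              α (edgeFace y x) x' y' * cur A ψ x' y') := by
  have hf1 := sum_eq (E := E) hA heig (α (edgeFace x y)) (hα (edgeFace x y)) (edgeFace x y)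
    (hαflux (edgeFace x y))
  have hf2 := sum_eq (E := E) hA heig (α (edgeFace y x)) (hα (edgeFace y x)) (edgeFace y x)
    (hαflux (edgeFace y x))
  rw [hf1, hf2]
  have hc : ∀ f : ℤ × ℤ,
      (if squareF f ⊆ box L then (1:ℝ) else 0) * ((1/2) * (2 * hF L A ψ f)) = hF L A ψ f := by
    intro f
    by_cases hs : squareF f ⊆ box L
    · rw [if_pos hs]; ring
    · rw [if_neg hs, hF_outside (E := E) hA heig f hs]; ring
  rw [hc, hc]
  rw [← Jt_eq_cur hx hy hxy, Jt_eq_hF_sub (E := E) hA heig hxy]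
end
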